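/- Let Δ be a natural number with Δ ≥ 25 and let C be a real number with C ≥ (e/(e-1))·Δ. Let E be a real number with 0 ≤ E ≤ 1, and let ε₁, …, ε_Δ be real numbers with -2 ≤ ε_i ≤ E for all i. Then 1 − ∏_{i=1}^{Δ} (1 + ε_i/(C-i)) ≥ 1 − (1 + 100/C)·exp(E·log(C/(C-Δ))). -/

import Mathlib

set_option maxHeartbeats 1000000 in
/-- Single-level error bound, lower-bound half: with `Δ ≥ 25`, `C ≥ (e/(e-1))·Δ`,
`0 ≤ E ≤ 1` and `-2 ≤ ε_i ≤ E` for `i = 1, …, Δ`, we have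
`1 − ∏_{i=1}^{Δ} (1 + ε_i/(C-i)) ≥ 1 − (1 + 100/C)·exp(E·log(C/(C-Δ)))`. -/
theorem stmt_7 (Δ : ℕ) (hΔ : 25 ≤ Δ) (C : ℝ)
    (hC : Real.exp 1 / (Real.exp 1 - 1) * Δ ≤ C)
    (E : ℝ) (hE0 : 0 ≤ E) (hE1 : E ≤ 1) (ε : ℕ → ℝ)
    (hlo : ∀ i ∈ Finset.Icc 1 Δ, -2 ≤ ε i)
    (hhi : ∀ i ∈ Finset.Icc 1 Δ, ε i ≤ E) :
    1 - ∏ i ∈ Finset.Icc 1 Δ, (1 + ε i / (C - i)) ≥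
      1 - (1 + 100 / C) * Real.exp (E * Real.log (C / (C - Δ))) := by
  have e1 : (2.7182818283:ℝ) < Real.exp 1 := Real.exp_one_gt_d9
  have e2 : Real.exp 1 < 2.7182818286 := Real.exp_one_lt_d9
  have hΔR : (25:ℝ) ≤ (Δ:ℝ) := by exact_mod_cast hΔ
  have hkey : Real.exp 1 * Δ ≤ C * (Real.exp 1 - 1) := by
    rw [div_mul_eq_mul_div, div_le_iff₀ (by linarith)] at hC; linarith
  have hC39 : (39:ℝ) ≤ C := by nlinarith
  have hD2 : (Δ:ℝ) ≤ 2 * (C - Δ) := by nlinarith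
  have hD : (12:ℝ) ≤ C - Δ := by linarith
  have hΔ3 : (Δ:ℝ)/3 ≤ C - Δ - 1 := by linarith
  have hDpos : (0:ℝ) < C - Δ := by linarith
  rw [ge_iff_le, sub_le_sub_iff_left]
  -- per-index facts
  have hiΔ : ∀ i ∈ Finset.Icc 1 Δ, (i:ℝ) ≤ (Δ:ℝ) := by
    intro i hi
    exact_mod_cast (Finset.mem_Icc.mp hi).2
  have hpos : ∀ i ∈ Finset.Icc 1 Δ, (0:ℝ) < C - i := fun i hi => by
    have := hiΔ i hi; linarith
  have hfac0 : ∀ i ∈ Finset.Icc 1 Δ, (0:ℝ) ≤ 1 + ε i / (C - i) := by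
    intro i hi
    have h2 := hpos i hi
    have h3 := hiΔ i hi
    have : (-1:ℝ) ≤ ε i / (C - i) := by
      rw [le_div_iff₀ h2]
      have := hlo i hi
      nlinarith
    linarith
  -- main chain
  calc ∏ i ∈ Finset.Icc 1 Δ, (1 + ε i / (C - i))
      ≤ ∏ i ∈ Finset.Icc 1 Δ, (1 + E / (C - i)) := by
        apply Finset.prod_le_prod hfac0
        intro i hi
        have h2 := hpos i hi
        have := hhi i hi
        have h4 : ε i / (C - i) ≤ E / (C - i) := by gcongr
        linarith
    _ ≤ ∏ i ∈ Finset.Icc 1 Δ, Real.exp (E / (C - i)) := by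
        apply Finset.prod_le_prod
        · intro i hi
          have h2 := hpos i hi
          have h3 : 0 ≤ E / (C - i) := div_nonneg hE0 h2.le
          linarith
        · intro i hi
          rw [add_comm]
          exact Real.add_one_le_exp _
    _ = Real.exp (∑ i ∈ Finset.Icc 1 Δ, E / (C - i)) := (Real.exp_sum _ _).symm
    _ ≤ Real.exp (E * Real.log (C / (C - Δ)) + 3 / C) := by
        apply Real.exp_le_exp.mpr
        -- bound the sum
        have step : ∀ i ∈ Finset.Icc 1 Δ,
            E / (C - i) ≤ E * (Real.log (C - i) - Real.log (C - i - 1)) := by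
          intro i hi
          have h2 := hpos i hi
          have h3 := hiΔ i hi
          have h1 : (0:ℝ) < C - i - 1 := by linarith
          have h := Real.log_le_sub_one_of_pos (show (0:ℝ) < (C - i - 1)/(C - i)
            from div_pos h1 h2)
          rw [Real.log_div (ne_of_gt h1) (ne_of_gt h2)] at h
          have hval : (C - i - 1)/(C - i) - 1 = -((C - i)⁻¹) := by
            field_simp; ring
          have hlg : (C - i)⁻¹ ≤ Real.log (C - i) - Real.log (C - i - 1) := by
            rw [hval] at h; linarith
          calc E / (C - i) = E * (C - i)⁻¹ := by rw [div_eq_mul_inv]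
            _ ≤ E * (Real.log (C - i) - Real.log (C - i - 1)) := by
                exact mul_le_mul_of_nonneg_left hlg hE0
        have tele : ∀ n : ℕ, ∑ i ∈ Finset.Icc 1 n,
            (Real.log (C - i) - Real.log (C - i - 1))
            = Real.log (C - 1) - Real.log (C - 1 - n) := by
          intro n
          induction n with
          | zero => simp
          | succ n ih =>
            rw [Finset.sum_Icc_succ_top (by omega), ih]
            have h1 : C - ((n+1:ℕ):ℝ) = C - 1 - n := by push_cast; ring
            have h2 : C - ((n+1:ℕ):ℝ) - 1 = C - 1 - ((n+1:ℕ):ℝ) := by push_cast; ring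
            rw [h2, h1]
            ring
        have hsum1 : ∑ i ∈ Finset.Icc 1 Δ, E / (C - i)
            ≤ E * (Real.log (C - 1) - Real.log (C - 1 - Δ)) := by
          calc ∑ i ∈ Finset.Icc 1 Δ, E / (C - i)
              ≤ ∑ i ∈ Finset.Icc 1 Δ, E * (Real.log (C - i) - Real.log (C - i - 1)) :=
                Finset.sum_le_sum step
            _ = E * (Real.log (C - 1) - Real.log (C - 1 - Δ)) := by
                rw [← Finset.mul_sum, tele Δ]
        have hlog2 : Real.log (C - 1) - Real.log (C - 1 - Δ)
            ≤ Real.log (C / (C - Δ)) + 3 / C := by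
          have hc0 : (0:ℝ) < C := by linarith
          have hc1 : (0:ℝ) < C - 1 := by linarith
          have hc2 : (0:ℝ) < C - Δ - 1 := by linarith
          have hx : (0:ℝ) < (C - 1)*(C - Δ)/(C*(C - Δ - 1)) := by positivity
          have h := Real.log_le_sub_one_of_pos hx
          rw [Real.log_div (by positivity) (by positivity),
            Real.log_mul (ne_of_gt hc1) (ne_of_gt hDpos),
            Real.log_mul (ne_of_gt hc0) (ne_of_gt hc2)] at h
          have hval : (C - 1)*(C - Δ)/(C*(C - Δ - 1)) - 1 = Δ/(C*(C - Δ - 1)) := by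
            field_simp; ring
          rw [hval] at h
          have hsmall : (Δ:ℝ)/(C*(C - Δ - 1)) ≤ 3/C := by
            rw [div_le_div_iff₀ (by positivity) hc0]
            nlinarith
          have heq : C - 1 - (Δ:ℝ) = C - Δ - 1 := by ring
          rw [heq]
          rw [Real.log_div (ne_of_gt hc0) (ne_of_gt hDpos)]
          linarith
        have hEmul : E * (Real.log (C - 1) - Real.log (C - 1 - Δ))
            ≤ E * Real.log (C / (C - Δ)) + 3 / C := by
          have h3C : (0:ℝ) ≤ 3 / C := by positivity
          nlinarith [mul_le_mul_of_nonneg_left hlog2 hE0]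
        linarith
    _ = Real.exp (E * Real.log (C / (C - Δ))) * Real.exp (3 / C) := Real.exp_add _ _
    _ ≤ (1 + 100 / C) * Real.exp (E * Real.log (C / (C - Δ))) := by
        rw [mul_comm]
        apply mul_le_mul_of_nonneg_right _ (Real.exp_pos _).le
        -- exp (3/C) ≤ 1 + 100/C
        have hx0 : (0:ℝ) < 3 / C := by positivity
        have hx1 : (3:ℝ) / C ≤ 1/2 := by
          rw [div_le_div_iff₀ (by linarith) (by norm_num)]; linarith
        have hc0 : (0:ℝ) < C := by linarith
        have h := Real.add_one_le_exp (-(3/C))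
        have hexp : Real.exp (3/C) * Real.exp (-(3/C)) = 1 := by
          rw [← Real.exp_add]; simp
        have key : Real.exp (3/C) * (1 - 3/C) ≤ 1 := by
          nlinarith [mul_le_mul_of_nonneg_left h (Real.exp_pos (3/C)).le]
        have hqp : (1:ℝ) ≤ (1 + 100/C) * (1 - 3/C) := by
          have : (1 + 100/C) * (1 - 3/C) - 1 = (97*C - 300)/C^2 := by
            field_simp; ring
          have hnn : (0:ℝ) ≤ (97*C - 300)/C^2 :=
            div_nonneg (by linarith) (by positivity)
          linarith
        have hphalf : (1:ℝ)/2 ≤ 1 - 3/C := by linarith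
        set A := Real.exp (3/C) with hA
        have hApos : (0:ℝ) < A := Real.exp_pos _
        nlinarith [key, hqp, hphalf, hApos]
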